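/- Let S be a finite non-empty linearly ordered set and ω : S → ℕ_{>0} a weight function. Then there exists an injective prefix-free code ρ : S → {0,1}* such that (a) |ρ(x)| ≤ log₂(ω(S)) − log₂(ω(x)) + 3 for each x ∈ S, and (b) for all x, y ∈ S with x < y, ρ(x) is lexicographically less than ρ(y). -/

import Mathlib

def toBits : ℕ → ℕ → List Bool
  | 0, _ => []
  | ℓ+1, n => toBits ℓ (n / 2) ++ [decide (n % 2 = 1)]

lemma toBits_length (ℓ n : ℕ) : (toBits ℓ n).length = ℓ := by
  induction ℓ generalizing n with
  | zero => rfl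
  | succ ℓ ih => simp [toBits, ih]

lemma toBits_inj {ℓ n m : ℕ} (hn : n < 2^ℓ) (hm : m < 2^ℓ)
    (h : toBits ℓ n = toBits ℓ m) : n = m := by
  induction ℓ generalizing n m with
  | zero => simp [pow_zero] at hn hm; omega
  | succ ℓ ih =>
    simp only [toBits] at h
    obtain ⟨h1, h2⟩ := List.append_inj h (by simp [toBits_length])
    have hp : 2 ^ (ℓ+1) = 2^ℓ * 2 := by ring
    have hd : n / 2 = m / 2 :=
      ih (Nat.div_lt_of_lt_mul (by omega)) (Nat.div_lt_of_lt_mul (by omega)) h1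
    have hm2 : (decide (n % 2 = 1)) = (decide (m % 2 = 1)) := by
      simpa using h2
    have : (n % 2 = 1) ↔ (m % 2 = 1) := by
      simpa [decide_eq_decide] using hm2
    omega
  
lemma toBits_prefix {ℓ ℓ' : ℕ} (h : ℓ ≤ ℓ') (n : ℕ) :
    toBits ℓ (n / 2^(ℓ'-ℓ)) <+: toBits ℓ' n := by
  induction ℓ' generalizing n with
  | zero =>
    have : ℓ = 0 := by omega
    subst this; simp
  | succ ℓ' ih =>
    rcases eq_or_lt_of_le h with rfl | h'
    · simp
    · have hle : ℓ ≤ ℓ' := by omega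
      have heq : n / 2 ^ (ℓ' + 1 - ℓ) = (n / 2) / 2 ^ (ℓ' - ℓ) := by
        rw [Nat.div_div_eq_div_mul]
        congr 1
        rw [← pow_succ']
        congr 1
        omega
      rw [heq]
      exact (ih hle (n/2)).trans (List.prefix_append _ _)

lemma lex_append {r : Bool → Bool → Prop} {a c : List Bool} (s t : List Bool)
    (hlen : a.length = c.length) (h : List.Lex r a c) :
    List.Lex r (a ++ s) (c ++ t) := by
  induction h with
  | nil => simp at hlen
  | rel hr => exact List.Lex.rel hr
  | cons h ih => exact List.Lex.cons (ih (by simpa using hlen))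

lemma lex_append_same {r : Bool → Bool → Prop} (a : List Bool) {s t : List Bool}
    (h : List.Lex r s t) : List.Lex r (a ++ s) (a ++ t) := by
  induction a with
  | nil => simpa
  | cons b a ih => exact List.Lex.cons ih

lemma toBits_lex {ℓ n m : ℕ} (hm : m < 2^ℓ) (h : n < m) :
    List.Lex (· < ·) (toBits ℓ n) (toBits ℓ m) := by
  induction ℓ generalizing n m with
  | zero => simp [pow_zero] at hm; omega
  | succ ℓ ih =>
    have hp : 2 ^ (ℓ+1) = 2^ℓ * 2 := by ring
    have hm2 : m / 2 < 2^ℓ := Nat.div_lt_of_lt_mul (by omega)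
    rcases lt_or_eq_of_le (Nat.div_le_div_right (c := 2) h.le) with h' | h'
    · exact lex_append _ _ (by simp [toBits_length]) (ih hm2 h')
    · have hbits : n % 2 = 0 ∧ m % 2 = 1 := by omega
      show toBits ℓ (n/2) ++ [decide (n % 2 = 1)] <
        toBits ℓ (m/2) ++ [decide (m % 2 = 1)]
      rw [h', hbits.1, hbits.2]
      exact lex_append_same _ (List.Lex.rel (by decide))

lemma div_eq_sub_lt {a b c : ℕ} (hc : 0 < c) (hab : a ≤ b) (h : a / c = b / c) :
    b - a < c := by
  have h1 := Nat.div_add_mod a c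
  have h2 := Nat.div_add_mod b c
  have h3 := Nat.mod_lt b hc
  rw [← h] at h2
  set p := c * (a / c) with hp
  omega

lemma main_aux {α : Type} [LinearOrder α] (S : Finset α)
    (ω : α → ℕ) (hω : ∀ x ∈ S, 0 < ω x) (W : ℕ) (hW : 0 < W)
    (m L : α → ℕ)
    (hub : ∀ x ∈ S, m x + ω x ≤ 2*W)
    (hkey : ∀ x ∈ S, ∀ y ∈ S, x < y → m x + ω x + ω y ≤ m y)
    (hpow : ∀ x ∈ S, 2*W ≤ ω x * 2^(L x)) :
    ∃ ρ : α → List Bool,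
      Set.InjOn ρ S ∧
      (∀ x ∈ S, ∀ y ∈ S, x ≠ y → ¬ (ρ x <+: ρ y)) ∧
      (∀ x ∈ S, (ρ x).length = L x) ∧
      (∀ x ∈ S, ∀ y ∈ S, x < y → List.Lex (· < ·) (ρ x) (ρ y)) := by
  have h2W : 0 < 2*W := by omega
  set ρ : α → List Bool := fun x => toBits (L x) (m x * 2^(L x) / (2*W)) with hρ
  -- floor at arbitrary level ℓ
  have hflt : ∀ x ∈ S, ∀ ℓ : ℕ, m x * 2^ℓ / (2*W) < 2^ℓ := by
    intro x hx ℓ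
    apply Nat.div_lt_of_lt_mul
    have hmx : m x < 2*W := by have := hub x hx; have := hω x hx; omega
    exact (Nat.mul_lt_mul_right (Nat.pow_pos (by norm_num))).mpr hmx
  -- truncation identity
  have htrunc : ∀ (M ℓ ℓ' : ℕ), ℓ ≤ ℓ' →
      (M * 2^ℓ' / (2*W)) / 2^(ℓ'-ℓ) = M * 2^ℓ / (2*W) := by
    intro M ℓ ℓ' h
    rw [Nat.div_div_eq_div_mul]
    have h1 : M * 2^ℓ' = (M * 2^ℓ) * 2^(ℓ'-ℓ) := by
      rw [mul_assoc, ← pow_add]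
      congr 2
      omega
    rw [h1, Nat.mul_div_mul_right _ _ (Nat.pow_pos (by norm_num))]
  -- separation
  have hsep : ∀ x ∈ S, ∀ y ∈ S, ∀ ℓ : ℕ, x < y →
      (2*W ≤ ω x * 2^ℓ ∨ 2*W ≤ ω y * 2^ℓ) →
      m x * 2^ℓ / (2*W) ≠ m y * 2^ℓ / (2*W) := by
    intro x hx y hy ℓ hxy hd heq
    have hk := hkey x hx y hy hxy
    have hab : m x * 2^ℓ ≤ m y * 2^ℓ :=
      Nat.mul_le_mul_right _ (by omega)
    have hlt := div_eq_sub_lt h2W hab heq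
    have hsub : m y * 2^ℓ - m x * 2^ℓ = (m y - m x) * 2^ℓ := by
      rw [Nat.sub_mul]
    rw [hsub] at hlt
    have hge : (ω x + ω y) * 2^ℓ ≤ (m y - m x) * 2^ℓ :=
      Nat.mul_le_mul_right _ (by omega)
    rcases hd with hd | hd
    · have : ω x * 2^ℓ ≤ (ω x + ω y) * 2^ℓ := Nat.mul_le_mul_right _ (by omega)
      omega
    · have : ω y * 2^ℓ ≤ (ω x + ω y) * 2^ℓ := Nat.mul_le_mul_right _ (by omega)
      omega
  have hlen : ∀ x, (ρ x).length = L x := fun x => toBits_length _ _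
  -- prefix-free
  have hpf : ∀ x ∈ S, ∀ y ∈ S, x ≠ y → ¬ (ρ x <+: ρ y) := by
    intro x hx y hy hne h
    have hLle : L x ≤ L y := by
      have := h.length_le
      rwa [hlen, hlen] at this
    have h2 : toBits (L x) ((m y * 2^(L y) / (2*W)) / 2^(L y - L x)) <+: ρ y :=
      toBits_prefix hLle _
    rw [htrunc _ _ _ hLle] at h2
    have heqlist : ρ x = toBits (L x) (m y * 2^(L x) / (2*W)) :=
      (List.prefix_of_prefix_length_le h h2
        (by rw [hlen, toBits_length])).eq_of_length (by rw [hlen, toBits_length])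
    have heq : m x * 2^(L x) / (2*W) = m y * 2^(L x) / (2*W) :=
      toBits_inj (hflt x hx _) (hflt y hy _) heqlist
    rcases lt_or_gt_of_ne hne with hxy | hxy
    · exact hsep x hx y hy (L x) hxy (Or.inl (hpow x hx)) heq
    · exact hsep y hy x hx (L x) hxy (Or.inr (hpow x hx)) heq.symm
  refine ⟨ρ, ?_, hpf, fun x _ => hlen x, ?_⟩
  · intro x hx y hy hxy
    by_contra hne
    exact hpf x hx y hy hne (hxy ▸ List.prefix_refl _)
  · intro x hx y hy hxy
    rcases le_or_gt (L x) (L y) with hL | hL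
    · -- compare at level L x
      have ht : toBits (L x) (m y * 2^(L x) / (2*W)) <+: ρ y := by
        have := toBits_prefix hL (m y * 2^(L y) / (2*W))
        rwa [htrunc _ _ _ hL] at this
      have hle : m x * 2^(L x) / (2*W) ≤ m y * 2^(L x) / (2*W) := by
        apply Nat.div_le_div_right
        apply Nat.mul_le_mul_right
        have := hkey x hx y hy hxy
        omega
      have hlt : m x * 2^(L x) / (2*W) < m y * 2^(L x) / (2*W) :=
        lt_of_le_of_ne hle (hsep x hx y hy (L x) hxy (Or.inl (hpow x hx)))
      obtain ⟨s, hs⟩ := ht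
      have hlex := toBits_lex (hflt y hy (L x)) hlt
      have := lex_append (r := (· < ·)) [] s (by simp [toBits_length]) hlex
      rw [List.append_nil, hs] at this
      exact this
    · -- compare at level L y
      have ht : toBits (L y) (m x * 2^(L y) / (2*W)) <+: ρ x := by
        have := toBits_prefix hL.le (m x * 2^(L x) / (2*W))
        rwa [htrunc _ _ _ hL.le] at this
      have hle : m x * 2^(L y) / (2*W) ≤ m y * 2^(L y) / (2*W) := by
        apply Nat.div_le_div_right
        apply Nat.mul_le_mul_right
        have := hkey x hx y hy hxy
        omega
      have hlt : m x * 2^(L y) / (2*W) < m y * 2^(L y) / (2*W) :=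
        lt_of_le_of_ne hle (hsep x hx y hy (L y) hxy (Or.inr (hpow y hy)))
      obtain ⟨s, hs⟩ := ht
      have hlex := toBits_lex (hflt y hy (L y)) hlt
      have := lex_append (r := (· < ·)) s [] (by simp [toBits_length]) hlex
      rw [List.append_nil, hs] at this
      exact this

theorem stmt_2 {α : Type} [LinearOrder α] (S : Finset α) (hS : S.Nonempty)
    (ω : α → ℕ) (hω : ∀ x ∈ S, 0 < ω x) :
    ∃ ρ : α → List Bool,
      Set.InjOn ρ S ∧
      (∀ x ∈ S, ∀ y ∈ S, x ≠ y → ¬ (ρ x <+: ρ y)) ∧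
      (∀ x ∈ S, ((ρ x).length : ℝ) ≤
        Real.logb 2 (∑ y ∈ S, (ω y : ℝ)) - Real.logb 2 (ω x) + 3) ∧
      (∀ x ∈ S, ∀ y ∈ S, x < y → List.Lex (· < ·) (ρ x) (ρ y)) := by
  classical
  set W : ℕ := ∑ y ∈ S, ω y with hWdef
  have hW : 0 < W := Finset.sum_pos hω hS
  set P : α → ℕ := fun x => ∑ y ∈ S.filter (· < x), ω y with hPdef
  set m : α → ℕ := fun x => 2 * P x + ω x with hmdef
  set L : α → ℕ := fun x => Nat.clog 2 (2*W) - Nat.log 2 (ω x) with hLdef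
  have hωW : ∀ x ∈ S, ω x ≤ W := fun x hx => Finset.single_le_sum (fun i _ => Nat.zero_le _) hx
  have hins : ∀ x ∈ S, P x + ω x = ∑ y ∈ insert x (S.filter (· < x)), ω y := by
    intro x hx
    rw [Finset.sum_insert (by simp)]
    ring
  have hub : ∀ x ∈ S, m x + ω x ≤ 2*W := by
    intro x hx
    have hsub : insert x (S.filter (· < x)) ⊆ S := by
      intro z hz
      rcases Finset.mem_insert.mp hz with rfl | hz
      · exact hx
      · exact (Finset.mem_filter.mp hz).1
    have h1 : P x + ω x ≤ W := by
      rw [hins x hx]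
      exact Finset.sum_le_sum_of_subset hsub
    simp only [hmdef]
    omega
  have hkey : ∀ x ∈ S, ∀ y ∈ S, x < y → m x + ω x + ω y ≤ m y := by
    intro x hx y hy hxy
    have hsub : insert x (S.filter (· < x)) ⊆ S.filter (· < y) := by
      intro z hz
      rcases Finset.mem_insert.mp hz with rfl | hz
      · exact Finset.mem_filter.mpr ⟨hx, hxy⟩
      · obtain ⟨hzS, hzx⟩ := Finset.mem_filter.mp hz
        exact Finset.mem_filter.mpr ⟨hzS, hzx.trans hxy⟩
    have h1 : P x + ω x ≤ P y := by
      rw [hins x hx]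
      exact Finset.sum_le_sum_of_subset hsub
    simp only [hmdef]
    omega
  have hlogle : ∀ x ∈ S, Nat.log 2 (ω x) ≤ Nat.clog 2 (2*W) := by
    intro x hx
    have h1 : 2 ^ Nat.log 2 (ω x) ≤ ω x := Nat.pow_log_le_self 2 (hω x hx).ne'
    have h2 : 2*W ≤ 2 ^ Nat.clog 2 (2*W) := Nat.le_pow_clog (by norm_num) _
    have h3 : 2 ^ Nat.log 2 (ω x) ≤ 2 ^ Nat.clog 2 (2*W) := by
      have := hωW x hx
      omega
    exact (Nat.pow_le_pow_iff_right (by norm_num)).mp h3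
  have hpow : ∀ x ∈ S, 2*W ≤ ω x * 2^(L x) := by
    intro x hx
    have h1 : 2 ^ Nat.log 2 (ω x) ≤ ω x := Nat.pow_log_le_self 2 (hω x hx).ne'
    have h2 : 2*W ≤ 2 ^ Nat.clog 2 (2*W) := Nat.le_pow_clog (by norm_num) _
    have h3 : 2 ^ Nat.clog 2 (2*W) = 2 ^ Nat.log 2 (ω x) * 2 ^ (L x) := by
      rw [← pow_add]
      congr 1
      have := hlogle x hx
      simp only [hLdef]
      omega
    calc 2*W ≤ 2 ^ Nat.clog 2 (2*W) := h2
      _ = 2 ^ Nat.log 2 (ω x) * 2 ^ (L x) := h3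
      _ ≤ ω x * 2 ^ (L x) := Nat.mul_le_mul_right _ h1
  obtain ⟨ρ, hinj, hpf, hlen, hlex⟩ := main_aux S ω hω W hW m L hub hkey hpow
  refine ⟨ρ, hinj, hpf, ?_, hlex⟩
  intro x hx
  rw [hlen x hx]
  -- real arithmetic
  have hsumcast : (∑ y ∈ S, (ω y : ℝ)) = (W : ℝ) := by
    rw [hWdef]
    push_cast
    rfl
  rw [hsumcast]
  set c := Nat.clog 2 (2*W) with hc
  set l := Nat.log 2 (ω x) with hl
  have hLx : (L x : ℝ) = (c : ℝ) - (l : ℝ) := by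
    simp only [hLdef]
    rw [Nat.cast_sub (hlogle x hx)]
  rw [hLx]
  have hωpos : (0:ℝ) < (ω x : ℝ) := by exact_mod_cast hω x hx
  have hWpos : (0:ℝ) < (W : ℝ) := by exact_mod_cast hW
  -- bound c : (c:ℝ) < logb 2 W + 2
  have hc1 : (2:ℕ) ^ c < 4 * W := by
    have h1 : 2 ^ (c - 1) < 2*W := by
      rw [hc]
      exact Nat.pow_pred_clog_lt_self (by norm_num) (by omega)
    have hcpos : 0 < c := Nat.clog_pos (by norm_num) (by omega)
    have : 2 ^ c = 2 * 2 ^ (c - 1) := by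
      rw [← pow_succ']
      congr 1
      omega
    omega
  have hcR : (c : ℝ) < Real.logb 2 (W : ℝ) + 2 := by
    have h2 : ((2:ℝ)) ^ c < 4 * (W:ℝ) := by exact_mod_cast hc1
    have h3 : Real.logb 2 ((2:ℝ) ^ c) < Real.logb 2 (4 * (W:ℝ)) :=
      Real.logb_lt_logb (by norm_num) (by positivity) h2
    rw [Real.logb_pow, Real.logb_self_eq_one (by norm_num)] at h3
    have h4 : Real.logb 2 (4 * (W:ℝ)) = 2 + Real.logb 2 (W:ℝ) := by
      rw [Real.logb_mul (by norm_num) (by positivity)]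
      congr 1
      rw [show (4:ℝ) = 2^2 by norm_num, Real.logb_pow,
        Real.logb_self_eq_one (by norm_num)]
      norm_num
    rw [h4] at h3
    simpa using by linarith [h3]
  -- bound l : logb 2 (ω x) < l + 1
  have hlR : Real.logb 2 (ω x : ℝ) < (l : ℝ) + 1 := by
    have h1 : (ω x : ℕ) < 2 ^ (l + 1) := by
      rw [hl]
      exact Nat.lt_pow_succ_log_self (by norm_num) _
    have h2 : ((ω x : ℝ)) < (2:ℝ) ^ (l + 1) := by exact_mod_cast h1
    have h3 : Real.logb 2 (ω x : ℝ) < Real.logb 2 ((2:ℝ) ^ (l+1)) :=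
      Real.logb_lt_logb (by norm_num) hωpos h2
    rwa [Real.logb_pow, Real.logb_self_eq_one (by norm_num), mul_one,
      Nat.cast_add, Nat.cast_one] at h3
  linarith
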